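/- For every natural number n and variable x, the Legendre polynomial satisfies P_n(x) = \sum_{k=0}^{n} \binom{n+k}{2k} \binom{2k}{k} ((x-1)/2)^k. -/

import Mathlib

open Polynomial Finset

/-- The Legendre polynomial `P n`, defined via Rodrigues' formula. -/
noncomputable def legendre (n : ℕ) : Polynomial ℚ :=
  ((2 ^ n * n.factorial : ℚ)⁻¹) • ((fun q => Polynomial.derivative q)^[n] ((X ^ 2 - 1) ^ n))

lemma expand_pow (n : ℕ) : ((X : ℚ[X]) ^ 2 - 1) ^ n =
    ∑ j ∈ Finset.range (n + 1),
      Polynomial.C ((n.choose j : ℚ) * 2 ^ (n - j)) * (X - 1) ^ (n + j) := by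
  have h : ((X : ℚ[X]) ^ 2 - 1) = (X - 1) * ((X - 1) + 2) := by ring
  rw [h, mul_pow, add_pow, Finset.mul_sum]
  refine Finset.sum_congr rfl fun j hj => ?_
  simp only [map_mul, map_pow, Polynomial.C_eq_natCast, map_ofNat]
  ring

lemma iter_deriv_sum {s : Finset ℕ} (f : ℕ → ℚ[X]) (m : ℕ) :
    Polynomial.derivative^[m] (∑ j ∈ s, f j) = ∑ j ∈ s, Polynomial.derivative^[m] (f j) := by
  induction m with
  | zero => simp
  | succ m ih => simp only [Function.iterate_succ_apply', ih, derivative_sum]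

lemma keyQ {n j : ℕ} (hj : j ≤ n) :
    ((2:ℚ) ^ n * n.factorial)⁻¹ * ((n.choose j : ℚ) * 2 ^ (n - j)) * (n.factorial * (n + j).choose n) =
      ((n + j).choose (2 * j) * (2 * j).choose j : ℚ) * (1 / 2) ^ j := by
  have h2 : (2:ℚ) ^ n = 2 ^ (n - j) * 2 ^ j := by
    rw [← pow_add]; congr 1; omega
  rw [Nat.cast_choose ℚ hj, Nat.cast_choose ℚ (show n ≤ n + j by omega),
      Nat.cast_choose ℚ (show 2 * j ≤ n + j by omega),
      Nat.cast_choose ℚ (show j ≤ 2 * j by omega), h2]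
  have e1 : n + j - n = j := by omega
  have e2 : n + j - 2 * j = n - j := by omega
  have e3 : 2 * j - j = j := by omega
  rw [e1, e2, e3]
  have f1 : (n.factorial : ℚ) ≠ 0 := Nat.cast_ne_zero.2 n.factorial_ne_zero
  have f2 : (j.factorial : ℚ) ≠ 0 := Nat.cast_ne_zero.2 j.factorial_ne_zero
  have f3 : ((n - j).factorial : ℚ) ≠ 0 := Nat.cast_ne_zero.2 (n-j).factorial_ne_zero
  have f4 : (((2*j)).factorial : ℚ) ≠ 0 := Nat.cast_ne_zero.2 (2*j).factorial_ne_zero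
  have f5 : ((n + j).factorial : ℚ) ≠ 0 := Nat.cast_ne_zero.2 (n+j).factorial_ne_zero
  field_simp
  ring_nf
  rw [← mul_pow]; norm_num

theorem stmt0 (n : ℕ) :
    legendre n = ∑ k ∈ Finset.range (n + 1),
      ((n + k).choose (2 * k) * (2 * k).choose k : ℚ) •
        (Polynomial.C (1 / 2 : ℚ) * (X - 1)) ^ k := by
  have hd : (fun q : ℚ[X] => Polynomial.derivative q) = Polynomial.derivative := rfl
  unfold legendre
  rw [hd, expand_pow, iter_deriv_sum, Finset.smul_sum]
  refine Finset.sum_congr rfl fun j hj => ?_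
  have hj' : j ≤ n := Nat.lt_succ_iff.mp (Finset.mem_range.mp hj)
  have h1 : ((X : ℚ[X]) - 1) = X - Polynomial.C 1 := by simp
  rw [h1, iterate_derivative_C_mul, iterate_derivative_X_sub_pow]
  have e : n + j - n = j := by omega
  rw [e, Nat.descFactorial_eq_factorial_mul_choose]
  rw [mul_pow, ← Polynomial.C_pow, nsmul_eq_mul, Polynomial.smul_eq_C_mul,
      Polynomial.smul_eq_C_mul]
  have hc : ((n.factorial * (n + j).choose n : ℕ) : ℚ[X])
      = Polynomial.C ((n.factorial : ℚ) * (n + j).choose n) := by push_cast; simp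
  rw [hc]
  simp only [← mul_assoc, ← Polynomial.C_mul]
  congr 1
  rw [Polynomial.C_inj]
  linear_combination keyQ hj'
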